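/- Let F be a sparseness measure with cost function J on ℝⁿ, let A be an m×n real matrix, and let k ≥ 1. Then A satisfies RRC at sparsity k for J with some constant C > 0 if and only if there exists d > 0 such that the robust null space condition with parameter d holds for (A, k, J). -/

import Mathlib

noncomputable section

/-- `F : ℝ → ℝ` is a sparseness measure: nonnegative on `[0,∞)`,
vanishing exactly at `0`, and `F (|·|)` is subadditive on `ℝ`. -/
def SparsenessMeasure (F : ℝ → ℝ) : Prop :=
  (∀ t : ℝ, 0 ≤ t → 0 ≤ F t) ∧
  (∀ t : ℝ, 0 ≤ t → (F t = 0 ↔ t = 0)) ∧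
  (∀ x y : ℝ, F |x + y| ≤ F |x| + F |y|)

/-- The cost function `J(x) = ∑ i, F |x i|` on `ℝⁿ`. -/
def costJ {n : ℕ} (F : ℝ → ℝ) (x : EuclideanSpace ℝ (Fin n)) : ℝ :=
  ∑ i, F |x i|

/-- The restricted cost `J(x_T) = ∑ i ∈ T, F |x i|`. -/
def costJT {n : ℕ} (F : ℝ → ℝ) (T : Finset (Fin n)) (x : EuclideanSpace ℝ (Fin n)) : ℝ :=
  ∑ i ∈ T, F |x i|

/-- `x` has at most `k` nonzero entries. -/
def Sparse {n : ℕ} (k : ℕ) (x : EuclideanSpace ℝ (Fin n)) : Prop :=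
  ∃ T : Finset (Fin n), T.card ≤ k ∧ ∀ i ∉ T, x i = 0

/-- The matrix `A` acting as a continuous linear map between Euclidean spaces. -/
def mulVecCLM {m n : ℕ} (A : Matrix (Fin m) (Fin n) ℝ) :
    EuclideanSpace ℝ (Fin n) →L[ℝ] EuclideanSpace ℝ (Fin m) :=
  (((EuclideanSpace.equiv (Fin m) ℝ).symm : (Fin m → ℝ) →L[ℝ] EuclideanSpace ℝ (Fin m)).comp
    (Matrix.mulVecLin A).toContinuousLinearMap).comp
    ((EuclideanSpace.equiv (Fin n) ℝ) : EuclideanSpace ℝ (Fin n) →L[ℝ] (Fin n → ℝ))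

/-- `A` satisfies the robust recovery condition at sparsity `k` for the cost `J_F`
with constant `C`: for every `k`-sparse `x̄`, every `ε > 0`, every noise `v` with
`‖v‖ ≤ ε`, and every feasible `x̂` with `J(x̂) ≤ J(x̄)`, one has `‖x̄ - x̂‖ ≤ C ε`. -/
def RRC {m n : ℕ} (A : Matrix (Fin m) (Fin n) ℝ) (k : ℕ) (F : ℝ → ℝ) (C : ℝ) : Prop :=
  ∀ xbar : EuclideanSpace ℝ (Fin n), Sparse k xbar →
    ∀ ε : ℝ, 0 < ε →
      ∀ v : EuclideanSpace ℝ (Fin m), ‖v‖ ≤ ε →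
        ∀ xhat : EuclideanSpace ℝ (Fin n),
          ‖mulVecCLM A xhat - (mulVecCLM A xbar + v)‖ ≤ ε →
            costJ F xhat ≤ costJ F xbar → ‖xbar - xhat‖ ≤ C * ε

/-- The robust null space condition with parameter `d` for `(A, k, J_F)`. -/
def RNSP {m n : ℕ} (A : Matrix (Fin m) (Fin n) ℝ) (k : ℕ) (F : ℝ → ℝ) (d : ℝ) : Prop :=
  ∀ z ∈ LinearMap.ker (mulVecCLM A : EuclideanSpace ℝ (Fin n) →ₗ[ℝ] EuclideanSpace ℝ (Fin m)), z ≠ 0 →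
    ∀ η : EuclideanSpace ℝ (Fin n), ‖η‖ < d * ‖z‖ →
      ∀ T : Finset (Fin n), T.card ≤ k →
        costJT F T (z + η) < costJT F Tᶜ (z + η)

lemma cost_split {n : ℕ} (F : ℝ → ℝ) (T : Finset (Fin n)) (x : EuclideanSpace ℝ (Fin n)) :
    costJ F x = costJT F T x + costJT F Tᶜ x :=
  (Finset.sum_add_sum_compl T _).symm

lemma cost_diff {n : ℕ} {F : ℝ → ℝ} (hF : SparsenessMeasure F)
    {T : Finset (Fin n)} {xbar xhat : EuclideanSpace ℝ (Fin n)}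
    (hsupp : ∀ i ∉ T, xbar i = 0) (hJ : costJ F xhat ≤ costJ F xbar) :
    costJT F Tᶜ (xbar - xhat) ≤ costJT F T (xbar - xhat) := by
  obtain ⟨h1, h2, h3⟩ := hF
  have F0 : F 0 = 0 := (h2 0 le_rfl).mpr rfl
  have hsub : ∀ i, (xbar - xhat) i = xbar i - xhat i := fun i => rfl
  have hA : costJT F Tᶜ xbar = 0 := Finset.sum_eq_zero (fun i hi => by
    rw [hsupp i (Finset.mem_compl.mp hi), abs_zero, F0])
  have hB : costJT F Tᶜ xhat = costJT F Tᶜ (xbar - xhat) := by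
    apply Finset.sum_congr rfl
    intro i hi
    rw [hsub i, hsupp i (Finset.mem_compl.mp hi), zero_sub, abs_neg]
  have hC : costJT F T xbar ≤ costJT F T xhat + costJT F T (xbar - xhat) := by
    rw [costJT, costJT, costJT, ← Finset.sum_add_distrib]
    apply Finset.sum_le_sum
    intro i _
    have : xbar i = xhat i + (xbar i - xhat i) := by ring
    calc F |xbar i| = F |xhat i + (xbar i - xhat i)| := by rw [← this]
      _ ≤ F |xhat i| + F |xbar i - xhat i| := h3 _ _
      _ = F |xhat i| + F |(xbar - xhat) i| := by rw [hsub i]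
  have e1 := cost_split F T xbar
  have e2 := cost_split F T xhat
  linarith

theorem aux_inj {n m : ℕ} (f : EuclideanSpace ℝ (Fin n) →L[ℝ] EuclideanSpace ℝ (Fin m)) :
    ∃ c > 0, ∀ η ∈ (LinearMap.ker (f : EuclideanSpace ℝ (Fin n) →ₗ[ℝ] EuclideanSpace ℝ (Fin m)))ᗮ, ‖η‖ ≤ c * ‖f η‖ := by
  set K := LinearMap.ker (f : EuclideanSpace ℝ (Fin n) →ₗ[ℝ] EuclideanSpace ℝ (Fin m))
  set g : Kᗮ →ₗ[ℝ] EuclideanSpace ℝ (Fin m) := f.toLinearMap ∘ₗ Kᗮ.subtype with hg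
  have hginj : Function.Injective g := by
    rw [← LinearMap.ker_eq_bot, LinearMap.ker_eq_bot']
    intro x hx
    have hxK : (x : EuclideanSpace ℝ (Fin n)) ∈ K := by
      simpa [g, K, LinearMap.mem_ker] using hx
    have := Submodule.disjoint_def.mp (Submodule.orthogonal_disjoint K) x hxK x.2
    exact Subtype.ext this
  let e := (LinearEquiv.ofInjective g hginj).toContinuousLinearEquiv
  let es : ↥(LinearMap.range g) →L[ℝ] ↥Kᗮ := e.symm
  refine ⟨‖es‖ + 1, by positivity, ?_⟩
  intro η hη
  have h1 : (⟨η, hη⟩ : Kᗮ) = e.symm (e ⟨η, hη⟩) := (e.symm_apply_apply _).symm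
  have h2 : ‖e.symm (e ⟨η, hη⟩)‖ ≤ ‖es‖ * ‖e ⟨η, hη⟩‖ := es.le_opNorm _
  have h3 : ‖e ⟨η, hη⟩‖ = ‖f η‖ := by
    have : ((e ⟨η, hη⟩ : LinearMap.range g) : EuclideanSpace ℝ (Fin m)) = f η := by
      simp [e, g, LinearEquiv.coe_toContinuousLinearEquiv]
    rw [← this]; rfl
  have h0 : ‖η‖ = ‖(⟨η, hη⟩ : Kᗮ)‖ := rfl
  rw [h0, h1]
  calc ‖e.symm (e ⟨η, hη⟩)‖ ≤ ‖es‖ * ‖e ⟨η, hη⟩‖ := h2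
    _ ≤ (‖es‖ + 1) * ‖f η‖ := by
        rw [h3]
        exact mul_le_mul_of_nonneg_right (by linarith) (norm_nonneg _)

/-- Corollary 1: `A` satisfies RRC at sparsity `k` for `J` with some
constant `C > 0` if and only if the robust null space condition holds for some `d > 0`. -/
theorem stmt2 {m n : ℕ} (F : ℝ → ℝ) (hF : SparsenessMeasure F)
    (A : Matrix (Fin m) (Fin n) ℝ) (k : ℕ) (hk : 1 ≤ k) :
    (∃ C > 0, RRC A k F C) ↔ (∃ d > 0, RNSP A k F d) := by
  have F0 : F 0 = 0 := (hF.2.1 0 le_rfl).mpr rfl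
  constructor
  · rintro ⟨C, hC, hRRC⟩
    set M := ‖mulVecCLM A‖ with hM
    have hM0 : 0 ≤ M := norm_nonneg _
    refine ⟨1/(2*(1+C*M)), by positivity, ?_⟩
    intro z hz hz0 η hη T hT
    by_contra hcon
    push_neg at hcon
    set w : EuclideanSpace ℝ (Fin n) := z + η with hw
    set xbar : EuclideanSpace ℝ (Fin n) := WithLp.toLp 2 (fun i => if i ∈ T then w i else 0) with hxbar
    set xhat : EuclideanSpace ℝ (Fin n) := WithLp.toLp 2 (fun i => if i ∈ T then 0 else -(w i)) with hxhat
    have happb : ∀ i, xbar i = if i ∈ T then w i else 0 := fun i => rfl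
    have happh : ∀ i, xhat i = if i ∈ T then 0 else -(w i) := fun i => rfl
    have hdiff : xbar - xhat = w := by
      ext i
      show xbar i - xhat i = w i
      by_cases hi : i ∈ T <;> simp [happb, happh, hi]
    have hsparse : Sparse k xbar := ⟨T, hT, fun i hi => by simp [happb, hi]⟩
    have hcostbar : costJ F xbar = costJT F T w := by
      rw [cost_split F T]
      have hz1 : costJT F Tᶜ xbar = 0 := Finset.sum_eq_zero (fun i hi => by
        simp [happb, Finset.mem_compl.mp hi, F0])
      have hz2 : costJT F T xbar = costJT F T w :=
        Finset.sum_congr rfl (fun i hi => by simp [happb, hi])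
      rw [hz1, hz2, add_zero]
    have hcosthat : costJ F xhat = costJT F Tᶜ w := by
      rw [cost_split F T]
      have hz1 : costJT F T xhat = 0 := Finset.sum_eq_zero (fun i hi => by
        simp [happh, hi, F0])
      have hz2 : costJT F Tᶜ xhat = costJT F Tᶜ w :=
        Finset.sum_congr rfl (fun i hi => by
          simp [happh, Finset.mem_compl.mp hi])
      rw [hz1, hz2, zero_add]
    have hAz : mulVecCLM A z = 0 := LinearMap.mem_ker.mp hz
    have hAw : mulVecCLM A w = mulVecCLM A η := by
      rw [hw, map_add, hAz, zero_add]
    have hAv : mulVecCLM A xhat - mulVecCLM A xbar = -(mulVecCLM A η) := by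
      rw [← hAw, ← map_sub, show xhat - xbar = -w by rw [← hdiff]; abel, map_neg]
    have key : ∀ δ : ℝ, 0 < δ → ‖w‖ ≤ C * (‖mulVecCLM A η‖ + δ) := by
      intro δ hδ
      have hε : 0 < ‖mulVecCLM A η‖ + δ := by positivity
      have := hRRC xbar hsparse (‖mulVecCLM A η‖ + δ) hε (-(mulVecCLM A η))
        (by rw [norm_neg]; linarith) xhat
        (by rw [show mulVecCLM A xhat - (mulVecCLM A xbar + -(mulVecCLM A η)) =
              (mulVecCLM A xhat - mulVecCLM A xbar) + mulVecCLM A η by abel, hAv]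
            simp; positivity)
        (by rw [hcostbar, hcosthat]; exact hcon)
      rwa [hdiff] at this
    have hwA : ‖w‖ ≤ C * ‖mulVecCLM A η‖ := by
      refine le_of_forall_pos_le_add (fun δ hδ => ?_)
      have := key (δ / C) (by positivity)
      calc ‖w‖ ≤ C * (‖mulVecCLM A η‖ + δ / C) := this
        _ = C * ‖mulVecCLM A η‖ + δ := by field_simp
    have hAηb : ‖mulVecCLM A η‖ ≤ M * ‖η‖ := (mulVecCLM A).le_opNorm η
    have hzpos : 0 < ‖z‖ := norm_pos_iff.mpr hz0
    have hzb : ‖z‖ ≤ ‖w‖ + ‖η‖ := by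
      calc ‖z‖ = ‖w - η‖ := by rw [hw]; congr 1; abel
        _ ≤ ‖w‖ + ‖η‖ := norm_sub_le _ _
    have hfac : 0 < 1 + C * M := by positivity
    have hηz : (1 + C * M) * ‖η‖ < ‖z‖ / 2 := by
      have := mul_lt_mul_of_pos_left hη hfac
      calc (1 + C * M) * ‖η‖ < (1 + C * M) * (1/(2*(1+C*M)) * ‖z‖) := this
        _ = ‖z‖ / 2 := by field_simp
    nlinarith [mul_le_mul_of_nonneg_left hAηb (le_of_lt hC)]
  · rintro ⟨d, hd, hRNSP⟩
    obtain ⟨c, hc, hcb⟩ := aux_inj (mulVecCLM A)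
    refine ⟨2*c*(1 + 1/d), by positivity, ?_⟩
    intro xbar hsp ε hε v hv xhat hres hJ
    obtain ⟨T, hT, hsupp⟩ := hsp
    set h : EuclideanSpace ℝ (Fin n) := xbar - xhat with hh
    have hAh : ‖mulVecCLM A h‖ ≤ 2*ε := by
      have heq : mulVecCLM A h = -((mulVecCLM A xhat - (mulVecCLM A xbar + v)) + v) := by
        rw [hh, map_sub]; abel
      rw [heq, norm_neg]
      calc ‖(mulVecCLM A xhat - (mulVecCLM A xbar + v)) + v‖
          ≤ ‖mulVecCLM A xhat - (mulVecCLM A xbar + v)‖ + ‖v‖ := norm_add_le _ _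
        _ ≤ ε + ε := add_le_add hres hv
        _ = 2*ε := by ring
    set K := LinearMap.ker (mulVecCLM A : EuclideanSpace ℝ (Fin n) →ₗ[ℝ] EuclideanSpace ℝ (Fin m)) with hK
    set z : EuclideanSpace ℝ (Fin n) := (K.orthogonalProjectionOnto h : EuclideanSpace ℝ (Fin n)) with hzdef
    set η : EuclideanSpace ℝ (Fin n) := h - z with hηdef
    have hzK : z ∈ K := (K.orthogonalProjectionOnto h).2
    have hηK : η ∈ Kᗮ := Submodule.sub_starProjection_mem_orthogonal (K := K) h
    have hAz : mulVecCLM A z = 0 := LinearMap.mem_ker.mp hzK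
    have hAη : mulVecCLM A η = mulVecCLM A h := by
      rw [hηdef, map_sub, hAz, sub_zero]
    have hηb : ‖η‖ ≤ c * (2*ε) := by
      have := hcb η hηK
      rw [hAη] at this
      calc ‖η‖ ≤ c * ‖mulVecCLM A h‖ := this
        _ ≤ c * (2*ε) := mul_le_mul_of_nonneg_left hAh (le_of_lt hc)
    have hcost : costJT F Tᶜ h ≤ costJT F T h := cost_diff hF hsupp hJ
    have hzη : z + η = h := by rw [hηdef]; abel
    have hzsmall : d * ‖z‖ ≤ ‖η‖ := by
      by_contra hlt
      push_neg at hlt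
      have hz0 : z ≠ 0 := by
        intro h0
        rw [h0, norm_zero, mul_zero] at hlt
        exact absurd hlt (norm_nonneg η).not_gt
      have := hRNSP z hzK hz0 η hlt T hT
      rw [hzη] at this
      linarith
    have hzb : ‖z‖ ≤ 2*c*ε/d := by
      rw [le_div_iff₀ hd]
      nlinarith
    have hhb : ‖h‖ ≤ ‖z‖ + ‖η‖ := by rw [← hzη]; exact norm_add_le _ _
    show ‖xbar - xhat‖ ≤ 2*c*(1 + 1/d)*ε
    rw [← hh]
    have : 2*c*(1 + 1/d)*ε = 2*c*ε/d + 2*c*ε := by field_simp; ring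
    rw [this]
    linarith
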